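/- Let α ∈ (0,1), let ρ and σ be density matrices of the same size, each of rank at most r, let ε₁, δ₁, ε₂ ∈ (0,1), let p₁ be a real polynomial with |p₁(x)| ≤ 1 for all x ∈ [−1,1] and |p₁(x) − (δ₁^{1−α}/2)·x^{α−1}| ≤ ε₁ for all x ∈ [δ₁,1], and let p₂ be a real polynomial with |p₂(x)| ≤ 1 for all x ∈ [−1,1] and |p₂(x) − (1/2)x^{1−α}| ≤ ε₂ for all x ∈ [0,1]. Then the trace norm of p₂(σ) restricted to the support of σ is bounded as tr(Π·|p₂(σ)|) ≤ r·ε₂ + r^α/2, where Π is the orthogonal projection onto the range of σ; in particular, if ρ and σ are r×r matrices, then ‖p₂(σ)‖₁ ≤ r·ε₂ + r^α/2. -/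

import Mathlib

open Matrix Polynomial
open scoped ComplexOrder

/-- The matrix power `A^β` of a Hermitian matrix, via the spectral decomposition:
apply `t ↦ t^β` to the eigenvalues, with the convention `0^β = 0`. In particular
`matPow A 0` is the orthogonal projection onto the range of `A`.
(Junk value `0` if `A` is not Hermitian.) -/
noncomputable def matPow {n : Type*} [Fintype n] [DecidableEq n]
    (A : Matrix n n ℂ) (β : ℝ) : Matrix n n ℂ :=
  if hA : A.IsHermitian then hA.cfc (fun x => if x = 0 then 0 else x ^ β) else 0

/-- The matrix absolute value `|A| = √(Aᴴ A)`. -/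
noncomputable def matAbs {n : Type*} [Fintype n] [DecidableEq n] (A : Matrix n n ℂ) :
    Matrix n n ℂ :=
  (Matrix.posSemidef_conjTranspose_mul_self A).1.eigenvectorUnitary.1 *
    diagonal (((↑) : ℝ → ℂ) ∘ Real.sqrt ∘ (Matrix.posSemidef_conjTranspose_mul_self A).1.eigenvalues) *
    (star (Matrix.posSemidef_conjTranspose_mul_self A).1.eigenvectorUnitary : Matrix n n ℂ)

/-- The trace norm `‖A‖₁ = tr|A|`. -/
noncomputable def traceNorm {n : Type*} [Fintype n] [DecidableEq n] (A : Matrix n n ℂ) : ℝ :=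
  ((matAbs A).trace).re

namespace MyAux

variable {n : Type*} [Fintype n] [DecidableEq n] {A : Matrix n n ℂ} (hA : A.IsHermitian)

lemma star_mul_self_unit :
    star (hA.eigenvectorUnitary : Matrix n n ℂ) * (hA.eigenvectorUnitary : Matrix n n ℂ) = 1 :=
  Unitary.star_mul_self_of_mem (SetLike.coe_mem _)

lemma cfc_mul (f g : ℝ → ℝ) :
    hA.cfc f * hA.cfc g = hA.cfc (fun x => f x * g x) := by
  unfold Matrix.IsHermitian.cfc
  simp only [Unitary.conjStarAlgAut_apply]
  set U : Matrix n n ℂ := (hA.eigenvectorUnitary : Matrix n n ℂ)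
  have h1 : star U * U = 1 := star_mul_self_unit hA
  have h2 : U * diagonal (RCLike.ofReal ∘ f ∘ hA.eigenvalues) * star U *
      (U * diagonal (RCLike.ofReal ∘ g ∘ hA.eigenvalues) * star U)
      = U * (diagonal (RCLike.ofReal ∘ f ∘ hA.eigenvalues) * (star U * U) *
          diagonal (RCLike.ofReal ∘ g ∘ hA.eigenvalues)) * star U := by
    simp only [mul_assoc]
  rw [h2, h1, mul_one, diagonal_mul_diagonal]
  have h3 : (fun i => (RCLike.ofReal ∘ f ∘ hA.eigenvalues) i * (RCLike.ofReal ∘ g ∘ hA.eigenvalues) i)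
      = (RCLike.ofReal ∘ (fun x => f x * g x) ∘ hA.eigenvalues : n → ℂ) := by
    funext i
    simp [Function.comp, RCLike.ofReal_mul]
  rw [h3]

lemma trace_cfc (f : ℝ → ℝ) :
    (hA.cfc f).trace = ∑ i, (f (hA.eigenvalues i) : ℂ) := by
  unfold Matrix.IsHermitian.cfc
  simp only [Unitary.conjStarAlgAut_apply]
  rw [Matrix.trace_mul_cycle, star_mul_self_unit hA, one_mul, trace_diagonal]
  rfl

lemma cfc_posSemidef {f : ℝ → ℝ} (hf : ∀ x, 0 ≤ f x) : (hA.cfc f).PosSemidef := by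
  unfold Matrix.IsHermitian.cfc
  simp only [Unitary.conjStarAlgAut_apply]
  rw [Matrix.star_eq_conjTranspose]
  exact (Matrix.posSemidef_diagonal_iff.mpr fun i =>
    Complex.zero_le_real.mpr (hf _)).mul_mul_conjTranspose_same _

lemma cfc_isHermitian (f : ℝ → ℝ) : (hA.cfc f).IsHermitian := by
  rw [← hA.cfc_eq]
  exact cfc_predicate f A

lemma aeval_eq_cfc (p : Polynomial ℝ) : aeval A p = hA.cfc p.eval := by
  have h : IsSelfAdjoint A := hA
  rw [← cfc_polynomial (R := ℝ) p A h, hA.cfc_eq]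

lemma matAbs_cfc (f : ℝ → ℝ) : matAbs (hA.cfc f) = hA.cfc (fun x => |f x|) := by
  have h : (hA.cfc (fun x => |f x|)) ^ 2 = (hA.cfc f)ᴴ * (hA.cfc f) := by
    rw [(cfc_isHermitian hA f).eq, pow_two, cfc_mul, cfc_mul]
    have h4 : (fun x => |f x| * |f x|) = fun x => f x * f x :=
      funext fun x => abs_mul_abs_self (f x)
    rw [h4]
  have hB := (Matrix.posSemidef_conjTranspose_mul_self (hA.cfc f)).1
  have e0 : matAbs (hA.cfc f) = hB.cfc Real.sqrt := by
    rfl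
  have h' : (hA.cfc f)ᴴ * (hA.cfc f) = cfc (fun x => f x * f x) A := by
    rw [(cfc_isHermitian hA f).eq, cfc_mul, hA.cfc_eq]
  rw [e0, ← hB.cfc_eq, h', ← cfc_comp Real.sqrt (fun x => f x * f x) A hA.isSelfAdjoint
    (Set.Finite.continuousOn (Matrix.finite_real_spectrum.image _) _)
    (Set.Finite.continuousOn Matrix.finite_real_spectrum _), ← hA.cfc_eq]
  congr 1
  funext x
  exact Real.sqrt_mul_self_eq_abs (f x)

lemma self_eq_cfc_id : A = hA.cfc id := by
  have h : IsSelfAdjoint A := hA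
  conv_lhs => rw [← cfc_id ℝ A h]
  exact hA.cfc_eq id

lemma sum_rpow_le {ι : Type*} (t : Finset ι) (lam : ι → ℝ) (hnn : ∀ i, 0 ≤ lam i)
    (hsum : ∑ i ∈ t, lam i ≤ 1) {β : ℝ} (hβ : β ∈ Set.Ioo (0:ℝ) 1) :
    ∑ i ∈ t, lam i ^ β ≤ (t.card : ℝ) ^ (1 - β) := by
  have hβ0 : β ≠ 0 := ne_of_gt hβ.1
  have hp : (1:ℝ) ≤ β⁻¹ := (one_le_inv₀ hβ.1).mpr hβ.2.le
  have key := Real.inner_le_weight_mul_Lp_of_nonneg t hp (fun _ => 1) (fun i => lam i ^ β)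
      (fun _ => zero_le_one) (fun i => Real.rpow_nonneg (hnn i) β)
  simp only [one_mul, inv_inv, Finset.sum_const, nsmul_eq_mul, mul_one] at key
  have h2 : ∑ i ∈ t, (lam i ^ β) ^ β⁻¹ = ∑ i ∈ t, lam i :=
    Finset.sum_congr rfl fun i _ => Real.rpow_rpow_inv (hnn i) hβ0
  rw [h2] at key
  calc ∑ i ∈ t, lam i ^ β ≤ (t.card:ℝ)^(1-β) * (∑ i ∈ t, lam i)^β := key
  _ ≤ (t.card:ℝ)^(1-β) * 1 :=
      mul_le_mul_of_nonneg_left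
        (Real.rpow_le_one (Finset.sum_nonneg fun i _ => hnn i) hsum hβ.1.le) (by positivity)
  _ = _ := mul_one _

end MyAux

/-- With `Π = matPow σ 0` the orthogonal projection onto the range of `σ`,
`tr(Π |p₂(σ)|) ≤ r ε₂ + r^α/2`; in particular, if the matrices are `r × r`
(`Fintype.card n = r`), then `‖p₂(σ)‖₁ ≤ r ε₂ + r^α/2`. -/
theorem trace_proj_abs_poly_le {n : Type*} [Fintype n] [DecidableEq n] (r : ℕ)
    (α ε₁ δ₁ ε₂ : ℝ) (hα : α ∈ Set.Ioo (0 : ℝ) 1)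
    (hε₁ : ε₁ ∈ Set.Ioo (0 : ℝ) 1) (hδ₁ : δ₁ ∈ Set.Ioo (0 : ℝ) 1)
    (hε₂ : ε₂ ∈ Set.Ioo (0 : ℝ) 1)
    (ρ σ : Matrix n n ℂ)
    (hρ : ρ.PosSemidef) (hρ1 : ρ.trace = 1) (hρr : ρ.rank ≤ r)
    (hσ : σ.PosSemidef) (hσ1 : σ.trace = 1) (hσr : σ.rank ≤ r)
    (p₁ p₂ : Polynomial ℝ)
    (hp₁bdd : ∀ x ∈ Set.Icc (-1 : ℝ) 1, |p₁.eval x| ≤ 1)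
    (hp₁approx : ∀ x ∈ Set.Icc δ₁ 1, |p₁.eval x - δ₁ ^ (1 - α) / 2 * x ^ (α - 1)| ≤ ε₁)
    (hp₂bdd : ∀ x ∈ Set.Icc (-1 : ℝ) 1, |p₂.eval x| ≤ 1)
    (hp₂approx : ∀ x ∈ Set.Icc (0 : ℝ) 1, |p₂.eval x - (1 / 2) * x ^ (1 - α)| ≤ ε₂) :
    ((matPow σ 0 * matAbs (Polynomial.aeval σ p₂)).trace).re
        ≤ (r : ℝ) * ε₂ + (r : ℝ) ^ α / 2 ∧
      (Fintype.card n = r →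
        traceNorm (Polynomial.aeval σ p₂) ≤ (r : ℝ) * ε₂ + (r : ℝ) ^ α / 2) := by
  obtain ⟨hα0, hα1⟩ := hα
  have hH := hσ.1
  set lam := hH.eigenvalues with hlam
  have hnn : ∀ i, 0 ≤ lam i := hσ.eigenvalues_nonneg
  have htr : σ.trace = ∑ i, (lam i : ℂ) := by
    conv_lhs => rw [MyAux.self_eq_cfc_id hH]
    rw [MyAux.trace_cfc]
    simp
    rfl
  have hsum1 : ∑ i, lam i = 1 := by
    have h : ((∑ i, lam i : ℝ) : ℂ) = 1 := by
      push_cast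
      rw [← htr]
      exact hσ1
    exact_mod_cast h
  have hsum_le : ∀ t : Finset n, ∑ i ∈ t, lam i ≤ 1 := fun t =>
    hsum1 ▸ Finset.sum_le_univ_sum_of_nonneg hnn
  have hle1 : ∀ i, lam i ≤ 1 := fun i =>
    calc lam i ≤ ∑ j, lam j := Finset.single_le_sum (fun j _ => hnn j) (Finset.mem_univ i)
    _ = 1 := hsum1
  have hpt : ∀ i, |p₂.eval (lam i)| ≤ ε₂ + 1/2 * lam i ^ (1 - α) := fun i => by
    have h := hp₂approx (lam i) ⟨hnn i, hle1 i⟩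
    have habs : |1/2 * lam i ^ (1-α)| = 1/2 * lam i ^ (1-α) :=
      abs_of_nonneg (mul_nonneg (by norm_num) (Real.rpow_nonneg (hnn i) _))
    calc |p₂.eval (lam i)|
        ≤ |p₂.eval (lam i) - 1/2 * lam i ^ (1-α)| + |1/2 * lam i ^ (1-α)| := by
          have h' := abs_add_le (p₂.eval (lam i) - 1/2 * lam i ^ (1-α)) (1/2 * lam i ^ (1-α))
          simpa using h'
    _ ≤ ε₂ + 1/2 * lam i ^ (1-α) := by rw [habs]; exact add_le_add_left h _
  have hβ : (1 - α) ∈ Set.Ioo (0:ℝ) 1 := ⟨by linarith, by linarith⟩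
  have hrpow : ∀ t : Finset n, t.card ≤ r → ∑ i ∈ t, lam i ^ (1-α) ≤ (r:ℝ)^α := by
    intro t ht
    calc ∑ i ∈ t, lam i ^ (1-α) ≤ (t.card : ℝ) ^ (1 - (1-α)) :=
        MyAux.sum_rpow_le t lam hnn (hsum_le t) hβ
    _ = (t.card:ℝ)^α := by norm_num
    _ ≤ (r:ℝ)^α := Real.rpow_le_rpow (by positivity) (Nat.cast_le.mpr ht) hα0.le
  have key : ∀ t : Finset n, t.card ≤ r →
      ∑ i ∈ t, |p₂.eval (lam i)| ≤ (r:ℝ) * ε₂ + (r:ℝ)^α/2 := by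
    intro t ht
    calc ∑ i ∈ t, |p₂.eval (lam i)| ≤ ∑ i ∈ t, (ε₂ + 1/2 * lam i ^ (1-α)) :=
        Finset.sum_le_sum fun i _ => hpt i
    _ = (t.card : ℝ) * ε₂ + 1/2 * ∑ i ∈ t, lam i ^ (1-α) := by
        rw [Finset.sum_add_distrib, Finset.sum_const, ← Finset.mul_sum, nsmul_eq_mul]
    _ ≤ (r:ℝ) * ε₂ + 1/2 * (r:ℝ)^α := by
        have h1 := hrpow t ht
        have h2 : (t.card : ℝ) ≤ (r:ℝ) := Nat.cast_le.mpr ht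
        nlinarith [hε₂.1.le]
    _ = (r:ℝ) * ε₂ + (r:ℝ)^α/2 := by ring
  classical
  set s : Finset n := Finset.univ.filter (fun i => lam i ≠ 0) with hs
  have hcards : s.card = σ.rank := by
    rw [hH.rank_eq_card_non_zero_eigs, Fintype.card_subtype]
  have hsr : s.card ≤ r := by rw [hcards]; exact hσr
  have habsσ : matAbs (aeval σ p₂) = hH.cfc (fun x => |p₂.eval x|) := by
    rw [MyAux.aeval_eq_cfc hH, MyAux.matAbs_cfc]
  constructor
  · have e1 : matPow σ 0 = hH.cfc (fun x => if x = 0 then 0 else x ^ (0:ℝ)) := dif_pos hH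
    have re_sum : ∀ g : n → ℝ, (∑ i, ((g i : ℝ) : ℂ)).re = ∑ i, g i := fun g => by
      rw [← Complex.ofReal_sum]
      exact Complex.ofReal_re _
    rw [e1, habsσ, MyAux.cfc_mul, MyAux.trace_cfc, re_sum]
    trans (∑ i ∈ s, |p₂.eval (lam i)|)
    · apply le_of_eq
      rw [hs, Finset.sum_filter]
      refine Finset.sum_congr rfl fun i _ => ?_
      simp only [hlam]
      by_cases h : hH.eigenvalues i = 0 <;> simp [h]
    · exact key s hsr
  · intro hcard
    have re_sum : ∀ g : n → ℝ, (∑ i, ((g i : ℝ) : ℂ)).re = ∑ i, g i := fun g => by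
      rw [← Complex.ofReal_sum]
      exact Complex.ofReal_re _
    unfold traceNorm
    rw [habsσ, MyAux.trace_cfc, re_sum]
    exact key Finset.univ (by rw [Finset.card_univ, hcard])
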